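/- arXiv:2407.07508 — 2 statements merged into one kernel-verified Lean document; each statement's English description precedes it below -/
import Mathlib

section
/- Assume additionally that α_n ≠ 0 for all n ≥ 0. Then for all nonnegative integers n, r, and s, the generalized moment μ_{n,r,s} equals the weight sum Σ_{p ∈ Sch_{n,r,s}} wt_S(p) over all Schröder paths from (0,r) to (n,s) that do not start with a vertical down-step. -/
open Polynomial LaurentPolynomial Finset

noncomputable section

/-- Extension of the Verblunsky coefficients to integer indices, with the
convention `α₋₁ = -1` (and junk value `-1` for all negative indices). -/
def az (α : ℕ → ℂ) (k : ℤ) : ℂ := if 0 ≤ k then α k.toNat else -1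

/-- The monic OPUC `Φ_n` defined by Szegő's recurrence
`Φ_{n+1}(z) = z·Φ_n(z) - conj(α_n)·Φ_n^*(z)`, where `Φ_n^*` is the reverse
polynomial `reflect n (map conj Φ_n)`. -/
def szego (α : ℕ → ℂ) : ℕ → Polynomial ℂ
  | 0 => 1
  | n + 1 =>
      Polynomial.X * szego α n -
        Polynomial.C ((starRingEnd ℂ) (α n)) *
          Polynomial.reflect n ((szego α n).map (starRingEnd ℂ))

/-- `f̄(1/z)` as a Laurent polynomial, for a polynomial `f`. -/
def polyBarInv (f : Polynomial ℂ) : LaurentPolynomial ℂ :=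
  f.sum fun k c => LaurentPolynomial.C ((starRingEnd ℂ) c) * LaurentPolynomial.T (-(k : ℤ))

/-- `f̄(1/z)` as a Laurent polynomial, for a Laurent polynomial `f`. -/
def laurentBarInv (f : LaurentPolynomial ℂ) : LaurentPolynomial ℂ :=
  Finsupp.sum (AddMonoidAlgebra.coeff f) fun k c => LaurentPolynomial.C ((starRingEnd ℂ) c) * LaurentPolynomial.T (-k)

/-- The generalized moment `μ_{n,r,s} = ⟨Φ_s(z), z^n·Φ_r(z)⟩ / ⟨Φ_s(z), Φ_s(z)⟩`,
where `⟨f,g⟩ = L(f(z)·ḡ(1/z))` and `⟨Φ_s, Φ_s⟩ = ∏_{j<s} (1 - |α_j|²)`. -/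
def genMom (L : LaurentPolynomial ℂ →ₗ[ℂ] ℂ) (α : ℕ → ℂ) (n : ℤ) (r s : ℕ) : ℂ :=
  L (Polynomial.toLaurent (szego α s) *
      laurentBarInv (LaurentPolynomial.T n * Polynomial.toLaurent (szego α r))) /
    ∏ j ∈ Finset.range s, ((1 - Complex.normSq (α j) : ℝ) : ℂ)

/-- `IsLatticePath S p l q` : the list of steps `l`, starting at `p`, forms a lattice
path from `p` to `q` lying weakly above the x-axis, each step `st` taken from a
position `x` satisfying the (possibly position-dependent) step condition `S x st`. -/
def IsLatticePath (S : ℤ × ℤ → ℤ × ℤ → Prop) : ℤ × ℤ → List (ℤ × ℤ) → ℤ × ℤ → Prop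
  | p, [], q => p = q ∧ 0 ≤ p.2
  | p, st :: rest, q => 0 ≤ p.2 ∧ S p st ∧ IsLatticePath S (p + st) rest q

/-- The weight of a path: the product of the weights of its steps, where the weight
of a step may depend on its starting position. -/
def pathWeight (w : ℤ × ℤ → ℤ × ℤ → ℂ) : ℤ × ℤ → List (ℤ × ℤ) → ℂ
  | _, [] => 1
  | p, st :: rest => w p st * pathWeight w (p + st) rest

/-- Łukasiewicz steps: `(1, k)` with `k ≤ 1`. -/
def lukaStep (_p st : ℤ × ℤ) : Prop := st.1 = 1 ∧ st.2 ≤ 1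

/-- Łukasiewicz step weights: an up-step has weight `1`, and a step
`(a,b) → (a+1,b-k)` (`0 ≤ k ≤ b`) has weight
`-α_b·conj(α_{b-k-1})·∏_{j=b-k}^{b-1} (1-|α_j|²)`. -/
def wtLstep (α : ℕ → ℂ) (p st : ℤ × ℤ) : ℂ :=
  if st.2 = 1 then 1
  else
    -(az α p.2) * (starRingEnd ℂ) (az α (p.2 + st.2 - 1)) *
      ∏ j ∈ Finset.Ico (p.2 + st.2) p.2, ((1 - Complex.normSq (az α j) : ℝ) : ℂ)

/-- Gentle Motzkin steps: `(1,1)` (only at even `a+b`), `(1,0)`, `(1,-1)` (only at odd `a+b`). -/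
def gentleStep (p st : ℤ × ℤ) : Prop :=
  (st = (1, 1) ∧ Even (p.1 + p.2)) ∨ st = (1, 0) ∨ (st = (1, -1) ∧ Odd (p.1 + p.2))

/-- Gentle Motzkin step weights. -/
def wtMstep (α : ℕ → ℂ) (p st : ℤ × ℤ) : ℂ :=
  if st = (1, 1) then 1
  else if st = (1, -1) then ((1 - Complex.normSq (az α (p.2 - 1)) : ℝ) : ℂ)
  else if Even (p.1 + p.2) then az α p.2
  else -(starRingEnd ℂ) (az α (p.2 - 1))

/-- Schröder steps: `(1,1)`, `(1,0)`, `(0,-1)`. -/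
def schStep (_p st : ℤ × ℤ) : Prop := st = (1, 1) ∨ st = (1, 0) ∨ st = (0, -1)

/-- Schröder step weights. -/
def wtSstep (α : ℕ → ℂ) (p st : ℤ × ℤ) : ℂ :=
  if st = (1, 1) then 1
  else if st = (1, 0) then -((starRingEnd ℂ) (az α (p.2 - 1)) / (starRingEnd ℂ) (az α p.2))
  else
    ((starRingEnd ℂ) (az α (p.2 - 2)) / (starRingEnd ℂ) (az α (p.2 - 1))) *
      ((1 - Complex.normSq (az α (p.2 - 1)) : ℝ) : ℂ)







lemma laurentBarInv_add (f g : LaurentPolynomial ℂ) :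
    laurentBarInv (f + g) = laurentBarInv f + laurentBarInv g := by
  unfold laurentBarInv
  apply Finsupp.sum_add_index <;> intros <;> simp [map_add, add_mul]

lemma laurentBarInv_single (k : ℤ) (c : ℂ) :
    laurentBarInv (LaurentPolynomial.C c * T k) = LaurentPolynomial.C ((starRingEnd ℂ) c) * T (-k) := by
  rw [← single_eq_C_mul_T, ← single_eq_C_mul_T]
  unfold laurentBarInv
  rw [AddMonoidAlgebra.coeff_single, Finsupp.sum_single_index] <;> simp [single_eq_C_mul_T]

lemma laurentBarInv_T_mul (a : ℤ) (x : LaurentPolynomial ℂ) :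
    laurentBarInv (T a * x) = T (-a) * laurentBarInv x := by
  induction x using LaurentPolynomial.induction_on' with
  | add p q hp hq => rw [mul_add, laurentBarInv_add, hp, hq, laurentBarInv_add, mul_add]
  | C_mul_T n c =>
      rw [show T a * (LaurentPolynomial.C c * T n) = LaurentPolynomial.C c * T (a + n) by
        rw [T_add]; ring]
      rw [laurentBarInv_single, laurentBarInv_single, neg_add, T_add]; ring

lemma laurentBarInv_C_mul (c : ℂ) (x : LaurentPolynomial ℂ) :
    laurentBarInv (LaurentPolynomial.C c * x) = LaurentPolynomial.C ((starRingEnd ℂ) c) * laurentBarInv x := by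
  induction x using LaurentPolynomial.induction_on' with
  | add p q hp hq => rw [mul_add, laurentBarInv_add, hp, hq, laurentBarInv_add, mul_add]
  | C_mul_T n d =>
      rw [← mul_assoc, ← map_mul, laurentBarInv_single, laurentBarInv_single]
      simp only [map_mul]; ring

lemma laurentBarInv_laurentBarInv (x : LaurentPolynomial ℂ) :
    laurentBarInv (laurentBarInv x) = x := by
  induction x using LaurentPolynomial.induction_on' with
  | add p q hp hq => rw [laurentBarInv_add, laurentBarInv_add, hp, hq]
  | C_mul_T n c => rw [laurentBarInv_single, laurentBarInv_single]; simp

lemma laurentBarInv_toLaurent (f : Polynomial ℂ) :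
    laurentBarInv (Polynomial.toLaurent f) = polyBarInv f := by
  induction f using Polynomial.induction_on' with
  | add p q hp hq =>
      rw [map_add, laurentBarInv_add, hp, hq]
      unfold polyBarInv
      rw [Polynomial.sum_add_index] <;> intros <;> simp [map_add, add_mul]
  | monomial k c =>
      rw [Polynomial.toLaurent_C_mul_T, ← single_eq_C_mul_T]
      unfold laurentBarInv polyBarInv
      rw [AddMonoidAlgebra.coeff_single, Finsupp.sum_single_index (by simp)]
      rw [Polynomial.sum_monomial_index]
      simp

lemma laurentBarInv_one : laurentBarInv 1 = 1 := by
  have := laurentBarInv_single 0 1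
  simpa using this



-- reflect natDegree bound
lemma natDegree_reflect_le {f : Polynomial ℂ} {N : ℕ} (h : f.natDegree ≤ N) :
    (Polynomial.reflect N f).natDegree ≤ N := by
  apply Polynomial.natDegree_le_iff_coeff_eq_zero.mpr
  intro m hm
  rw [Polynomial.coeff_reflect, Polynomial.revAt_eq_self_of_lt hm]
  exact Polynomial.coeff_eq_zero_of_natDegree_lt (lt_of_le_of_lt h hm)

lemma toLaurent_reflect_aux (s : ℕ) (f : Polynomial ℂ) :
    Polynomial.toLaurent (Polynomial.reflect s (f.map (starRingEnd ℂ))) =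
      f.sum fun k c => LaurentPolynomial.C ((starRingEnd ℂ) c) * T ((Polynomial.revAt s k : ℕ) : ℤ) := by
  induction f using Polynomial.induction_on' with
  | add p q hp hq =>
      rw [Polynomial.map_add, Polynomial.reflect_add, map_add, hp, hq,
        Polynomial.sum_add_index] <;> intros <;> simp [map_add, add_mul]
  | monomial k c =>
      rw [Polynomial.map_monomial, ← Polynomial.C_mul_X_pow_eq_monomial,
        Polynomial.reflect_C_mul_X_pow, Polynomial.sum_monomial_index]
      · simp [Polynomial.toLaurent_C_mul_T, ← Polynomial.C_mul_X_pow_eq_monomial]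
      · simp

lemma toLaurent_reflect {f : Polynomial ℂ} {s : ℕ} (h : f.natDegree ≤ s) :
    Polynomial.toLaurent (Polynomial.reflect s (f.map (starRingEnd ℂ))) =
      T (s : ℤ) * polyBarInv f := by
  rw [toLaurent_reflect_aux]
  unfold polyBarInv
  rw [Polynomial.sum_def, Polynomial.sum_def, Finset.mul_sum]
  apply Finset.sum_congr rfl
  intro k hk
  have hks : k ≤ s := le_trans (Polynomial.le_natDegree_of_ne_zero
    (Polynomial.mem_support_iff.mp hk)) h
  rw [Polynomial.revAt_le hks]
  rw [show ((s - k : ℕ) : ℤ) = (s : ℤ) + (-(k:ℤ)) by omega]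
  rw [T_add]; ring




lemma natDegree_reflect_le' {f : Polynomial ℂ} {N : ℕ} (h : f.natDegree ≤ N) :
    (Polynomial.reflect N f).natDegree ≤ N := by
  apply Polynomial.natDegree_le_iff_coeff_eq_zero.mpr
  intro m hm
  rw [Polynomial.coeff_reflect, Polynomial.revAt_eq_self_of_lt hm]
  exact Polynomial.coeff_eq_zero_of_natDegree_lt (lt_of_le_of_lt h hm)

lemma szego_succ (α : ℕ → ℂ) (n : ℕ) : szego α (n+1) =
    Polynomial.X * szego α n -
      Polynomial.C ((starRingEnd ℂ) (α n)) *
        Polynomial.reflect n ((szego α n).map (starRingEnd ℂ)) := rfl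

lemma natDegree_szego_le (α : ℕ → ℂ) (n : ℕ) : (szego α n).natDegree ≤ n := by
  induction n with
  | zero => simp [szego]
  | succ n ih =>
      rw [szego_succ]
      apply le_trans (Polynomial.natDegree_sub_le _ _)
      apply max_le
      · exact le_trans (Polynomial.natDegree_mul_le) (by simp [Polynomial.natDegree_X]; omega)
      · apply le_trans (Polynomial.natDegree_mul_le)
        have h1 : ((szego α n).map (starRingEnd ℂ)).natDegree ≤ n :=
          le_trans (Polynomial.natDegree_map_le) ih
        have := natDegree_reflect_le' h1
        simp only [Polynomial.natDegree_C, zero_add]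
        omega

lemma coeff_szego_self (α : ℕ → ℂ) (n : ℕ) : (szego α n).coeff n = 1 := by
  induction n with
  | zero => simp [szego]
  | succ n ih =>
      rw [szego_succ, Polynomial.coeff_sub, Polynomial.coeff_X_mul, ih]
      have h1 : ((szego α n).map (starRingEnd ℂ)).natDegree ≤ n :=
        le_trans (Polynomial.natDegree_map_le) (natDegree_szego_le α n)
      have h2 : (Polynomial.C ((starRingEnd ℂ) (α n)) *
          Polynomial.reflect n ((szego α n).map (starRingEnd ℂ))).natDegree ≤ n := by
        apply le_trans (Polynomial.natDegree_mul_le)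
        have := natDegree_reflect_le' h1
        simp only [Polynomial.natDegree_C, zero_add]; omega
      rw [Polynomial.coeff_eq_zero_of_natDegree_lt (lt_of_le_of_lt h2 (Nat.lt_succ_self n))]
      ring



section Identities
variable (α : ℕ → ℂ)

def pp (s : ℕ) : LaurentPolynomial ℂ := Polynomial.toLaurent (szego α s)
def qq (r : ℕ) : LaurentPolynomial ℂ := polyBarInv (szego α r)

lemma T_mul_T_mul (a b : ℤ) (x : LaurentPolynomial ℂ) : T a * (T b * x) = T (a+b) * x := by
  rw [← mul_assoc, ← T_add]

lemma laurentBarInv_sub (x y : LaurentPolynomial ℂ) :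
    laurentBarInv (x - y) = laurentBarInv x - laurentBarInv y := by
  have h := laurentBarInv_add (x - y) y
  rw [sub_add_cancel] at h
  rw [h]; ring

lemma I1 (r : ℕ) : pp α (r+1) =
    T 1 * pp α r - LaurentPolynomial.C ((starRingEnd ℂ) (α r)) * (T (r:ℤ) * qq α r) := by
  unfold pp qq
  rw [szego_succ, map_sub, map_mul, map_mul, Polynomial.toLaurent_X, Polynomial.toLaurent_C,
    toLaurent_reflect (natDegree_szego_le α r)]

lemma I2 (r : ℕ) : qq α (r+1) =
    T (-1) * qq α r - LaurentPolynomial.C (α r) * (T (-(r:ℤ)) * pp α r) := by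
  have h : qq α (r+1) = laurentBarInv (pp α (r+1)) := by
    unfold pp qq; rw [laurentBarInv_toLaurent]
  rw [h, I1, laurentBarInv_sub, laurentBarInv_T_mul, laurentBarInv_C_mul, laurentBarInv_T_mul]
  unfold pp qq
  rw [show laurentBarInv (polyBarInv (szego α r)) = Polynomial.toLaurent (szego α r) by
    rw [← laurentBarInv_toLaurent, laurentBarInv_laurentBarInv]]
  simp [laurentBarInv_toLaurent]

lemma KA (r : ℕ) : T (-((r:ℤ)+1)) * pp α (r+1) =
    LaurentPolynomial.C (((1 - Complex.normSq (α r) : ℝ)) : ℂ) * (T (-(r:ℤ)) * pp α r)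
      - LaurentPolynomial.C ((starRingEnd ℂ) (α r)) * qq α (r+1) := by
  have e2 := I2 α r
  calc T (-((r:ℤ)+1)) * pp α (r+1)
      = T (-((r:ℤ)+1)) * (T 1 * pp α r) -
        LaurentPolynomial.C ((starRingEnd ℂ) (α r)) * (T (-((r:ℤ)+1)) * (T (r:ℤ) * qq α r)) := by
        rw [I1]; ring
    _ = T (-(r:ℤ)) * pp α r -
        LaurentPolynomial.C ((starRingEnd ℂ) (α r)) * (T (-1:ℤ) * qq α r) := by
        rw [T_mul_T_mul, T_mul_T_mul]
        norm_num
    _ = T (-(r:ℤ)) * pp α r - LaurentPolynomial.C ((starRingEnd ℂ) (α r)) *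
          (qq α (r+1) + LaurentPolynomial.C (α r) * (T (-(r:ℤ)) * pp α r)) := by
        rw [show T (-1:ℤ) * qq α r = qq α (r+1) + LaurentPolynomial.C (α r) * (T (-(r:ℤ)) * pp α r) by
          rw [e2]; ring]
    _ = _ := by
        have hC : LaurentPolynomial.C (((1 - Complex.normSq (α r) : ℝ)) : ℂ) =
            1 - LaurentPolynomial.C ((starRingEnd ℂ) (α r)) * LaurentPolynomial.C (α r) := by
          rw [← map_mul]
          rw [show ((starRingEnd ℂ) (α r) * α r) = (((Complex.normSq (α r) : ℝ)) : ℂ) from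
            (Complex.normSq_eq_conj_mul_self).symm]
          rw [show ((((1 - Complex.normSq (α r) : ℝ)) : ℂ)) =
            1 - (((Complex.normSq (α r) : ℝ)) : ℂ) by push_cast; ring]
          rw [map_sub, map_one]
        rw [hC]; ring
end Identities
section Ortho
variable (α : ℕ → ℂ) (L : LaurentPolynomial ℂ →ₗ[ℂ] ℂ)

lemma C_mul_eq_smul (c : ℂ) (x : LaurentPolynomial ℂ) : LaurentPolynomial.C c * x = c • x := by
  rw [LaurentPolynomial.C_eq_algebraMap, ← Algebra.smul_def]

lemma Tmulify (a b : ℤ) (c : ℂ) (x : LaurentPolynomial ℂ) :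
    T a * (LaurentPolynomial.C c * (T b * x)) = c • (T (a+b) * x) := by
  rw [← C_mul_eq_smul, ← T_mul_T_mul]; ring

lemma ortho (hLphi : ∀ k : ℕ, 1 ≤ k → L (Polynomial.toLaurent (szego α k)) = 0)
    (hLbar : ∀ k : ℕ, 1 ≤ k → L (polyBarInv (szego α k)) = 0) :
    ∀ n : ℕ, (∀ j : ℕ, j < n → L (T (-(j:ℤ)) * pp α n) = 0) ∧
      (∀ j : ℕ, j < n → L (T (j:ℤ) * qq α n) = 0) := by
  intro n
  induction n with
  | zero => exact ⟨fun j hj => absurd hj (Nat.not_lt_zero j), fun j hj => absurd hj (Nat.not_lt_zero j)⟩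
  | succ n ih =>
      constructor
      · intro j hj
        match j with
        | 0 =>
            rw [show ((0:ℕ):ℤ) = 0 by norm_num, neg_zero, T_zero, one_mul]
            exact hLphi (n+1) (by omega)
        | (j'+1) =>
            have hj' : j' < n := by omega
            have key : T (-((j'+1:ℕ):ℤ)) * pp α (n+1) =
                (T (-(j':ℤ)) * pp α n) -
                  ((starRingEnd ℂ) (α n)) • (T (((n-1-j' : ℕ)):ℤ) * qq α n) := by
              rw [I1 α n, mul_sub, T_mul_T_mul, Tmulify]
              congr 2
              · congr 1; push_cast; ring
              · congr 2; push_cast; omega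
            rw [key, map_sub, map_smul, ih.1 j' hj', ih.2 (n-1-j') (by omega)]
            simp
      · intro j hj
        match j with
        | 0 =>
            rw [show ((0:ℕ):ℤ) = 0 by norm_num, T_zero, one_mul]
            exact hLbar (n+1) (by omega)
        | (j'+1) =>
            have hj' : j' < n := by omega
            have key : T (((j'+1:ℕ)):ℤ) * qq α (n+1) =
                (T ((j':ℤ)) * qq α n) -
                  (α n) • (T (-((n-1-j' : ℕ):ℤ)) * pp α n) := by
              rw [I2 α n, mul_sub, T_mul_T_mul, Tmulify]
              congr 2
              · congr 1; push_cast; ring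
              · congr 2; push_cast; omega
            rw [key, map_sub, map_smul, ih.2 j' hj', ih.1 (n-1-j') (by omega)]
            simp

end Ortho

section Norms
variable (α : ℕ → ℂ) (L : LaurentPolynomial ℂ →ₗ[ℂ] ℂ)

def Kp (s : ℕ) : ℂ := ∏ j ∈ Finset.range s, (((1 - Complex.normSq (α j) : ℝ)) : ℂ)

lemma toLaurent_eq_sum (f : Polynomial ℂ) :
    Polynomial.toLaurent f = f.sum fun k c => LaurentPolynomial.C c * T (k:ℤ) := by
  induction f using Polynomial.induction_on' with
  | add p q hp hq =>
      rw [map_add, hp, hq, Polynomial.sum_add_index] <;> intros <;> simp [map_add, add_mul]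
  | monomial k c =>
      rw [Polynomial.sum_monomial_index]
      · exact Polynomial.toLaurent_C_mul_T k c
      · simp

lemma nuLem (hL1 : L 1 = 1)
    (hLbar : ∀ k : ℕ, 1 ≤ k → L (polyBarInv (szego α k)) = 0) :
    ∀ s : ℕ, L (T (-(s:ℤ)) * pp α s) = Kp α s := by
  intro s
  induction s with
  | zero =>
      rw [show ((0:ℕ):ℤ) = 0 by norm_num, neg_zero, T_zero, one_mul]
      unfold pp Kp
      simpa [szego] using hL1
  | succ s ih =>
      have key : T (-((s+1:ℕ):ℤ)) * pp α (s+1) =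
          (((1 - Complex.normSq (α s) : ℝ)) : ℂ) • (T (-(s:ℤ)) * pp α s)
            - ((starRingEnd ℂ) (α s)) • qq α (s+1) := by
        rw [show (-((s+1:ℕ):ℤ)) = -((s:ℤ)+1) by push_cast; ring, KA, C_mul_eq_smul, C_mul_eq_smul]
      rw [key, map_sub, map_smul, map_smul, ih]
      have : L (qq α (s+1)) = 0 := hLbar (s+1) (by omega)
      rw [this]
      unfold Kp
      rw [Finset.prod_range_succ]
      simp [smul_eq_mul]
      ring

lemma base_pairing (hL1 : L 1 = 1)
    (hLphi : ∀ k : ℕ, 1 ≤ k → L (Polynomial.toLaurent (szego α k)) = 0)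
    (hLbar : ∀ k : ℕ, 1 ≤ k → L (polyBarInv (szego α k)) = 0)
    (r s : ℕ) : L (pp α s * qq α r) = if r = s then Kp α s else 0 := by
  rcases lt_trichotomy r s with h | h | h
  · -- r < s : expand qq, use ortho.1
    have hq : pp α s * qq α r =
        ∑ k ∈ (szego α r).support, ((starRingEnd ℂ) ((szego α r).coeff k)) • (T (-(k:ℤ)) * pp α s) := by
      unfold qq polyBarInv
      rw [Polynomial.sum_def, Finset.mul_sum]
      apply Finset.sum_congr rfl; intro k _; rw [← C_mul_eq_smul]; ring
    rw [hq, map_sum, if_neg (by omega)]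
    apply Finset.sum_eq_zero
    intro k hk
    have hks : k ≤ r := le_trans (Polynomial.le_natDegree_of_ne_zero
      (Polynomial.mem_support_iff.mp hk)) (natDegree_szego_le α r)
    rw [map_smul, (ortho α L hLphi hLbar s).1 k (by omega)]
    simp
  · -- r = s
    subst h
    have hq : pp α r * qq α r =
        ∑ k ∈ (szego α r).support, ((starRingEnd ℂ) ((szego α r).coeff k)) • (T (-(k:ℤ)) * pp α r) := by
      unfold qq polyBarInv
      rw [Polynomial.sum_def, Finset.mul_sum]
      apply Finset.sum_congr rfl; intro k _; rw [← C_mul_eq_smul]; ring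
    rw [hq, map_sum, if_pos rfl]
    rw [Finset.sum_eq_single r]
    · rw [map_smul, coeff_szego_self, nuLem α L hL1 hLbar r]
      simp
    · intro k hk hkr
      have hks : k ≤ r := le_trans (Polynomial.le_natDegree_of_ne_zero
        (Polynomial.mem_support_iff.mp hk)) (natDegree_szego_le α r)
      rw [map_smul, (ortho α L hLphi hLbar r).1 k (by omega)]
      simp
    · intro hr
      rw [Polynomial.mem_support_iff] at hr
      push_neg at hr
      rw [coeff_szego_self] at hr
      exact absurd hr one_ne_zero
  · -- s < r : expand pp, use ortho.2
    have hp : pp α s * qq α r =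
        ∑ k ∈ (szego α s).support, ((szego α s).coeff k) • (T ((k:ℤ)) * qq α r) := by
      unfold pp
      rw [toLaurent_eq_sum, Polynomial.sum_def, Finset.sum_mul]
      apply Finset.sum_congr rfl; intro k _; rw [← C_mul_eq_smul]; ring
    rw [hp, map_sum, if_neg (by omega)]
    apply Finset.sum_eq_zero
    intro k hk
    have hks : k ≤ s := le_trans (Polynomial.le_natDegree_of_ne_zero
      (Polynomial.mem_support_iff.mp hk)) (natDegree_szego_le α s)
    rw [map_smul, (ortho α L hLphi hLbar r).2 k (by omega)]
    simp

end Norms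

section Chi
variable (α : ℕ → ℂ)

def wh (b : ℤ) : ℂ := -((starRingEnd ℂ) (az α (b-1)) / (starRingEnd ℂ) (az α b))
def wd (b : ℤ) : ℂ := ((starRingEnd ℂ) (az α (b-2)) / (starRingEnd ℂ) (az α (b-1))) *
  (((1 - Complex.normSq (az α (b-1)) : ℝ)) : ℂ)

def Chi (r : ℕ) : LaurentPolynomial ℂ :=
  (-((starRingEnd ℂ) (az α ((r:ℤ)-1)))⁻¹) • (T (-(r:ℤ)) * pp α r)

lemma az_coe (r : ℕ) : az α (r:ℤ) = α r := by simp [az]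

lemma az_ne (hα0 : ∀ k, α k ≠ 0) (k : ℤ) : az α k ≠ 0 := by
  unfold az
  split
  · exact hα0 _
  · exact neg_ne_zero.mpr one_ne_zero

lemma chi0 : Chi α 0 = 1 := by
  unfold Chi pp
  rw [show ((0:ℕ):ℤ) = 0 by norm_num]
  rw [show az α ((0:ℤ)-1) = -1 by simp [az]]
  simp [szego]

lemma step1 (r : ℕ) : T (-((r:ℤ)+1)) * pp α (r+1) =
    (T (-(r:ℤ)) * pp α r) - ((starRingEnd ℂ) (α r)) • (T (-1:ℤ) * qq α r) := by
  rw [I1 α r, mul_sub, T_mul_T_mul, Tmulify]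
  congr 2
  · congr 1; ring
  · congr 2; ring

lemma key1 (hα0 : ∀ k, α k ≠ 0) (r : ℕ) :
    T (-1:ℤ) * qq α r = Chi α (r+1) + (wh α (r:ℤ)) • Chi α r := by
  have hc : (starRingEnd ℂ) (az α (r:ℤ)) ≠ 0 := by
    simpa using (az_ne α hα0 (r:ℤ))
  have hd : (starRingEnd ℂ) (az α ((r:ℤ)-1)) ≠ 0 := by
    simpa using (az_ne α hα0 ((r:ℤ)-1))
  unfold Chi
  rw [show (-(((r:ℕ)+1:ℕ):ℤ)) = -((r:ℤ)+1) by push_cast; ring]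
  rw [step1 α r]
  rw [show ((((r:ℕ)+1:ℕ):ℤ)-1) = (r:ℤ) by push_cast; ring]
  rw [az_coe]
  unfold wh
  rw [show az α ((r:ℤ)) = α r from az_coe α r]
  have hc' : (starRingEnd ℂ) (α r) ≠ 0 := by rw [← az_coe α r]; exact hc
  match_scalars
  · field_simp
  · field_simp
    ring

lemma chi_rec (hα0 : ∀ k, α k ≠ 0) (r : ℕ) :
    Chi α (r+1) = qq α (r+1) + (wd α ((r:ℤ)+1)) • Chi α r := by
  have hc : (starRingEnd ℂ) (az α (r:ℤ)) ≠ 0 := by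
    simpa using (az_ne α hα0 (r:ℤ))
  have hd : (starRingEnd ℂ) (az α ((r:ℤ)-1)) ≠ 0 := by
    simpa using (az_ne α hα0 ((r:ℤ)-1))
  unfold Chi
  rw [show (-(((r:ℕ)+1:ℕ):ℤ)) = -((r:ℤ)+1) by push_cast; ring]
  rw [show ((((r:ℕ)+1:ℕ):ℤ)-1) = (r:ℤ) by push_cast; ring]
  rw [az_coe]
  rw [KA α r, C_mul_eq_smul, C_mul_eq_smul]
  unfold wd
  rw [show ((r:ℤ)+1-2) = (r:ℤ)-1 by ring, show ((r:ℤ)+1-1) = (r:ℤ) by ring, az_coe]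
  have hc' : (starRingEnd ℂ) (α r) ≠ 0 := by rw [← az_coe α r]; exact hc
  match_scalars
  · field_simp
  · field_simp

end Chi

section FFGG
variable (α : ℕ → ℂ)

def GGof (f : ℕ → ℕ → ℂ) : ℕ → ℕ → ℂ
  | 0, s => f 0 s
  | (r+1), s => f (r+1) s + wd α ((r:ℤ)+1) * GGof f r s

def FF : ℕ → ℕ → ℕ → ℂ
  | 0 => fun r s => if r = s then 1 else 0
  | (n+1) => fun r s => GGof α (FF n) (r+1) s + wh α (r:ℤ) * GGof α (FF n) r s

end FFGG

section Moments
variable (α : ℕ → ℂ) (L : LaurentPolynomial ℂ →ₗ[ℂ] ℂ)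

def Mm (n r s : ℕ) : ℂ := L (pp α s * (T (-(n:ℤ)) * qq α r)) / Kp α s
def Nn (n r s : ℕ) : ℂ := L (pp α s * (T (-(n:ℤ)) * Chi α r)) / Kp α s

lemma Kp_ne (hα : ∀ k, ‖α k‖ < 1) (s : ℕ) : Kp α s ≠ 0 := by
  unfold Kp
  apply Finset.prod_ne_zero_iff.mpr
  intro j _
  have h1 : Complex.normSq (α j) < 1 := by
    have := hα j
    rw [← Complex.sq_norm]
    nlinarith [norm_nonneg (α j)]
  simp only [ne_eq, Complex.ofReal_eq_zero]
  intro h; rw [sub_eq_zero] at h; rw [← h] at h1; linarith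

lemma qq0 : qq α 0 = 1 := by
  unfold qq polyBarInv
  rw [show szego α 0 = 1 from rfl]
  rw [show (1 : Polynomial ℂ) = Polynomial.C 1 by simp]
  rw [Polynomial.sum_C_index (by simp)]
  simp

lemma Mm0 (hα : ∀ k, ‖α k‖ < 1) (hL1 : L 1 = 1)
    (hLphi : ∀ k : ℕ, 1 ≤ k → L (Polynomial.toLaurent (szego α k)) = 0)
    (hLbar : ∀ k : ℕ, 1 ≤ k → L (polyBarInv (szego α k)) = 0) (r s : ℕ) : Mm α L 0 r s = if r = s then 1 else 0 := by
  unfold Mm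
  rw [show ((0:ℕ):ℤ) = 0 by norm_num, neg_zero, T_zero, one_mul,
    base_pairing α L hL1 hLphi hLbar r s]
  split
  · exact div_self (Kp_ne α hα s)
  · exact zero_div _

lemma Nn0 (n s : ℕ) : Nn α L n 0 s = Mm α L n 0 s := by
  unfold Nn Mm
  rw [chi0, ← qq0 (α := α)]

lemma NnRec (hα0 : ∀ k, α k ≠ 0) (n r s : ℕ) :
    Nn α L n (r+1) s = Mm α L n (r+1) s + wd α ((r:ℤ)+1) * Nn α L n r s := by
  unfold Nn Mm
  rw [chi_rec α hα0 r]
  rw [show pp α s * (T (-(n:ℤ)) * (qq α (r+1) + wd α ((r:ℤ)+1) • Chi α r)) =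
    pp α s * (T (-(n:ℤ)) * qq α (r+1)) + wd α ((r:ℤ)+1) • (pp α s * (T (-(n:ℤ)) * Chi α r)) by
    rw [mul_add, mul_add, mul_smul_comm, mul_smul_comm]]
  rw [map_add, map_smul]
  simp only [smul_eq_mul]
  ring

lemma MmRec (hα0 : ∀ k, α k ≠ 0) (n r s : ℕ) :
    Mm α L (n+1) r s = Nn α L n (r+1) s + wh α (r:ℤ) * Nn α L n r s := by
  unfold Nn Mm
  have h1 : T (-((n+1:ℕ):ℤ)) * qq α r = T (-(n:ℤ)) * (T (-1:ℤ) * qq α r) := by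
    rw [T_mul_T_mul]
    congr 1; congr 1; push_cast; ring
  rw [h1, key1 α hα0 r]
  rw [show pp α s * (T (-(n:ℤ)) * (Chi α (r+1) + wh α (r:ℤ) • Chi α r)) =
    pp α s * (T (-(n:ℤ)) * Chi α (r+1)) + wh α (r:ℤ) • (pp α s * (T (-(n:ℤ)) * Chi α r)) by
    rw [mul_add, mul_add, mul_smul_comm, mul_smul_comm]]
  rw [map_add, map_smul]
  simp only [smul_eq_mul]
  ring

lemma momFF (hα : ∀ k, ‖α k‖ < 1) (hα0 : ∀ k, α k ≠ 0) (hL1 : L 1 = 1)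
    (hLphi : ∀ k : ℕ, 1 ≤ k → L (Polynomial.toLaurent (szego α k)) = 0)
    (hLbar : ∀ k : ℕ, 1 ≤ k → L (polyBarInv (szego α k)) = 0) : ∀ n r s, Mm α L n r s = FF α n r s := by
  intro n
  induction n with
  | zero =>
      intro r s
      rw [Mm0 α L hα hL1 hLphi hLbar]
      rfl
  | succ n ih =>
      have hG : ∀ r s, Nn α L n r s = GGof α (FF α n) r s := by
        intro r
        induction r with
        | zero => intro s; rw [Nn0, ih]; rfl
        | succ r ihr =>
            intro s
            rw [NnRec α L hα0, ih, ihr]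
            rfl
      intro r s
      rw [MmRec α L hα0, hG, hG]
      rfl

end Moments





section Paths
variable (α : ℕ → ℂ)

lemma latticePath_nonneg {S : ℤ × ℤ → ℤ × ℤ → Prop} {p q : ℤ × ℤ} {l : List (ℤ × ℤ)}
    (h : IsLatticePath S p l q) : 0 ≤ p.2 := by
  cases l with
  | nil => exact h.2
  | cons st rest => exact h.1

lemma isLatticePath_shift (t : ℤ) :
    ∀ (l : List (ℤ × ℤ)) (a b : ℤ × ℤ),
      IsLatticePath schStep (a.1 + t, a.2) l (b.1 + t, b.2) ↔ IsLatticePath schStep a l b := by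
  intro l
  induction l with
  | nil =>
      intro a b
      constructor
      · rintro ⟨h1, h2⟩
        refine ⟨?_, h2⟩
        have := Prod.ext_iff.mp h1
        simp only at this
        exact Prod.ext_iff.mpr ⟨by omega, this.2⟩
      · rintro ⟨h1, h2⟩
        subst h1
        exact ⟨rfl, h2⟩
  | cons st rest ih =>
      intro a b
      show (0 ≤ a.2 ∧ schStep _ st ∧ _) ↔ (0 ≤ a.2 ∧ schStep _ st ∧ _)
      have hst : schStep (a.1 + t, a.2) st ↔ schStep a st := Iff.rfl
      have hadd : ((a.1 + t, a.2) : ℤ × ℤ) + st = ((a + st).1 + t, (a + st).2) := by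
        simp [Prod.ext_iff]; ring
      rw [hst, hadd, ih (a + st) b]

lemma pathWeight_shift (t : ℤ) :
    ∀ (l : List (ℤ × ℤ)) (a : ℤ × ℤ),
      pathWeight (wtSstep α) ((a.1 + t, a.2)) l = pathWeight (wtSstep α) a l := by
  intro l
  induction l with
  | nil => intro a; rfl
  | cons st rest ih =>
      intro a
      show wtSstep α (a.1 + t, a.2) st * _ = wtSstep α a st * _
      have h1 : wtSstep α (a.1 + t, a.2) st = wtSstep α a st := rfl
      have hadd : ((a.1 + t, a.2) : ℤ × ℤ) + st = ((a + st).1 + t, (a + st).2) := by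
        simp [Prod.ext_iff]; ring
      rw [h1, hadd, ih (a + st)]

def SF (n : ℕ) (r : ℤ) (s : ℕ) : Set (List (ℤ × ℤ)) :=
  {l | IsLatticePath schStep (0, r) l ((n : ℤ), (s : ℤ)) ∧ l.head? ≠ some (0, -1)}

def SG (n : ℕ) (r : ℤ) (s : ℕ) : Set (List (ℤ × ℤ)) :=
  {l | IsLatticePath schStep (0, r) l ((n : ℤ), (s : ℤ))}

lemma SG_neg {n : ℕ} {r : ℤ} {s : ℕ} (hr : r < 0) : SG n r s = ∅ := by
  ext l
  simp only [SG, Set.mem_setOf_eq, Set.mem_empty_iff_false, iff_false]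
  intro h
  have := latticePath_nonneg h
  simp only at this
  omega

lemma xmono : ∀ (l : List (ℤ × ℤ)) (p q : ℤ × ℤ), IsLatticePath schStep p l q →
    p.1 ≤ q.1 ∧ (p.1 = q.1 → (l = [] ∨ l.head? = some ((0:ℤ), (-1:ℤ)))) := by
  intro l
  induction l with
  | nil =>
      intro p q h
      rw [h.1]
      exact ⟨le_refl _, fun _ => Or.inl rfl⟩
  | cons st rest ih =>
      intro p q h
      obtain ⟨h0, hst, hrest⟩ := h
      have := ih (p + st) q hrest
      rcases hst with h1 | h1 | h1 <;> subst h1 <;> simp only [Prod.fst_add] at this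
      · exact ⟨by omega, fun h => by omega⟩
      · exact ⟨by omega, fun h => by omega⟩
      · exact ⟨by simpa using this.1, fun _ => Or.inr rfl⟩

lemma D0 (r : ℤ) (s : ℕ) : SF 0 r s = if r = (s:ℤ) then {([] : List (ℤ × ℤ))} else ∅ := by
  ext l
  constructor
  · rintro ⟨hl, hh⟩
    have hx := xmono l _ _ hl
    simp only [Nat.cast_zero] at hx
    have hl0 : l = [] := by
      rcases hx.2 (by simp) with h | h
      · exact h
      · exact absurd h hh
    subst hl0
    obtain ⟨hpq, -⟩ := hl
    have := Prod.ext_iff.mp hpq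
    simp only at this
    rw [if_pos this.2]
    rfl
  · intro hl
    by_cases hrs : r = (s:ℤ)
    · rw [if_pos hrs] at hl
      rw [Set.mem_singleton_iff] at hl
      subst hl hrs
      exact ⟨⟨by simp, by positivity⟩, by simp⟩
    · rw [if_neg hrs] at hl
      exact absurd hl (Set.notMem_empty l)

lemma D1 {n : ℕ} {r : ℤ} {s : ℕ} (hr : 0 ≤ r) :
    SG n r s = SF n r s ∪ (List.cons ((0:ℤ),(-1:ℤ))) '' SG n (r-1) s := by
  ext l
  constructor
  · intro hl
    by_cases hh : l.head? = some ((0:ℤ),(-1:ℤ))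
    · right
      match l, hh with
      | st :: rest, hh =>
          have hst : st = ((0:ℤ),(-1:ℤ)) := by simpa using hh
          subst hst
          refine ⟨rest, ?_, rfl⟩
          have h3 := hl.2.2
          have : ((0:ℤ), r) + ((0:ℤ),(-1:ℤ)) = ((0:ℤ), r - 1) := by
            simp [Prod.ext_iff]; ring
          rwa [this] at h3
    · exact Or.inl ⟨hl, hh⟩
  · rintro (⟨hl, -⟩ | ⟨t, ht, rfl⟩)
    · exact hl
    · refine ⟨hr, Or.inr (Or.inr rfl), ?_⟩
      have : ((0:ℤ), r) + ((0:ℤ),(-1:ℤ)) = ((0:ℤ), r - 1) := by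
        simp [Prod.ext_iff]; ring
      rwa [this]

lemma shifted_up (n : ℕ) (y : ℤ) (s : ℕ) (l : List (ℤ × ℤ)) :
    IsLatticePath schStep (1, y) l (((n+1:ℕ):ℤ), (s:ℤ)) ↔ l ∈ SG n y s := by
  have h := isLatticePath_shift 1 l ((0:ℤ), y) (((n:ℕ):ℤ), (s:ℤ))
  simp only [zero_add] at h
  rw [show (((n+1:ℕ)):ℤ) = ((n:ℕ):ℤ) + 1 by push_cast; ring]
  exact h

lemma D2 {n : ℕ} {r : ℤ} {s : ℕ} (hr : 0 ≤ r) :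
    SF (n+1) r s = (List.cons ((1:ℤ),(1:ℤ))) '' SG n (r+1) s ∪
      (List.cons ((1:ℤ),(0:ℤ))) '' SG n r s := by
  ext l
  constructor
  · rintro ⟨hl, hh⟩
    match l with
    | [] =>
        exfalso
        have := Prod.ext_iff.mp hl.1
        simp only at this
        have := this.1
        omega
    | st :: rest =>
        obtain ⟨h0, hst, hrest⟩ := hl
        rcases hst with h1 | h1 | h1
        · subst h1
          left
          refine ⟨rest, ?_, rfl⟩
          rw [← shifted_up]
          have : ((0:ℤ), r) + ((1:ℤ),(1:ℤ)) = ((1:ℤ), r + 1) := by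
            simp [Prod.ext_iff]
          rwa [this] at hrest
        · subst h1
          right
          refine ⟨rest, ?_, rfl⟩
          rw [← shifted_up]
          have : ((0:ℤ), r) + ((1:ℤ),(0:ℤ)) = ((1:ℤ), r) := by
            simp [Prod.ext_iff]
          rwa [this] at hrest
        · subst h1
          exact absurd rfl hh
  · rintro (⟨t, ht, rfl⟩ | ⟨t, ht, rfl⟩)
    · refine ⟨⟨hr, Or.inl rfl, ?_⟩, by simp [Prod.ext_iff]⟩
      have : ((0:ℤ), r) + ((1:ℤ),(1:ℤ)) = ((1:ℤ), r + 1) := by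
        simp [Prod.ext_iff]
      rw [this, shifted_up]
      exact ht
    · refine ⟨⟨hr, Or.inr (Or.inl rfl), ?_⟩, by simp [Prod.ext_iff]⟩
      have : ((0:ℤ), r) + ((1:ℤ),(0:ℤ)) = ((1:ℤ), r) := by
        simp [Prod.ext_iff]
      rw [this, shifted_up]
      exact ht

end Paths

section PathSums
variable (α : ℕ → ℂ)

lemma finSF0 (r : ℤ) (s : ℕ) : (SF 0 r s).Finite := by
  rw [D0]
  split
  · exact Set.finite_singleton _
  · exact Set.finite_empty

lemma finSG_of_finSF {n : ℕ} (h : ∀ (r : ℤ) (s : ℕ), (SF n r s).Finite) :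
    ∀ (r : ℤ) (s : ℕ), (SG n r s).Finite := by
  have key : ∀ (k : ℕ) (r : ℤ), r ≤ (k:ℤ) → ∀ s, (SG n r s).Finite := by
    intro k
    induction k with
    | zero =>
        intro r hr s
        rcases lt_or_eq_of_le hr with h' | h'
        · rw [SG_neg (by omega)]; exact Set.finite_empty
        · have h0 : r = 0 := by omega
          subst h0
          rw [D1 (le_refl 0)]
          refine (h 0 s).union (Set.Finite.image _ ?_)
          rw [SG_neg (by omega)]; exact Set.finite_empty
    | succ k ih =>
        intro r hr s
        by_cases hk : r ≤ (k:ℤ)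
        · exact ih r hk s
        · have hr1 : 0 ≤ r := by omega
          rw [D1 hr1]
          exact (h r s).union (Set.Finite.image _ (ih (r-1) (by omega) s))
  intro r s
  by_cases hr : 0 ≤ r
  · exact key r.toNat r (by omega) s
  · rw [SG_neg (by omega)]; exact Set.finite_empty

lemma finSF : ∀ (n : ℕ) (r : ℤ) (s : ℕ), (SF n r s).Finite := by
  intro n
  induction n with
  | zero => exact finSF0
  | succ n ih =>
      intro r s
      by_cases hr : 0 ≤ r
      · rw [D2 hr]
        exact ((finSG_of_finSF ih (r+1) s).image _).union ((finSG_of_finSF ih r s).image _)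
      · apply Set.Finite.subset (Set.finite_empty)
        rw [← SG_neg (show r < 0 by omega) (n := n+1) (s := s)]
        exact fun l hl => hl.1

lemma finSG (n : ℕ) (r : ℤ) (s : ℕ) : (SG n r s).Finite := finSG_of_finSF (finSF n) r s

def sF (n : ℕ) (r : ℤ) (s : ℕ) : ℂ := ∑ᶠ p ∈ SF n r s, pathWeight (wtSstep α) ((0:ℤ), r) p
def sG (n : ℕ) (r : ℤ) (s : ℕ) : ℂ := ∑ᶠ p ∈ SG n r s, pathWeight (wtSstep α) ((0:ℤ), r) p

lemma wt_up (r : ℤ) : wtSstep α ((0:ℤ), r) ((1:ℤ),(1:ℤ)) = 1 := if_pos rfl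

lemma wt_h (r : ℤ) : wtSstep α ((0:ℤ), r) ((1:ℤ),(0:ℤ)) = wh α r := by
  unfold wtSstep wh
  rw [if_neg (by simp [Prod.ext_iff]), if_pos rfl]

lemma wt_down (r : ℤ) : wtSstep α ((0:ℤ), r) ((0:ℤ),(-1:ℤ)) = wd α r := by
  unfold wtSstep wd
  rw [if_neg (by simp [Prod.ext_iff]), if_neg (by simp [Prod.ext_iff])]

lemma sF0 (r : ℤ) (s : ℕ) : sF α 0 r s = if r = (s:ℤ) then 1 else 0 := by
  unfold sF
  rw [D0]
  split
  · rw [finsum_mem_singleton]; rfl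
  · rw [finsum_mem_empty]

lemma sG_neg {n : ℕ} {r : ℤ} {s : ℕ} (hr : r < 0) : sG α n r s = 0 := by
  unfold sG
  rw [SG_neg hr, finsum_mem_empty]

lemma sG_rec (n : ℕ) (r : ℤ) (s : ℕ) (hr : 0 ≤ r) :
    sG α n r s = sF α n r s + wd α r * sG α n (r-1) s := by
  unfold sG sF
  rw [D1 hr]
  rw [finsum_mem_union ?disj (finSF n r s) ((finSG n (r-1) s).image _)]
  case disj =>
    rw [Set.disjoint_left]
    rintro l ⟨-, hh⟩ ⟨t, -, rfl⟩
    exact hh rfl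
  congr 1
  rw [finsum_mem_image (fun x _ y _ h => List.cons_injective h)]
  have hcong : ∀ t ∈ SG n (r-1) s, pathWeight (wtSstep α) ((0:ℤ), r) (((0:ℤ),(-1:ℤ)) :: t) =
      wd α r * pathWeight (wtSstep α) ((0:ℤ), r-1) t := by
    intro t _
    show wtSstep α ((0:ℤ), r) ((0:ℤ),(-1:ℤ)) * pathWeight (wtSstep α) (((0:ℤ),r) + ((0:ℤ),(-1:ℤ))) t = _
    rw [wt_down, show ((0:ℤ),r) + ((0:ℤ),(-1:ℤ)) = ((0:ℤ), r-1) by simp [Prod.ext_iff]; ring]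
  rw [finsum_mem_congr rfl hcong]
  rw [finsum_mem_eq_finite_toFinset_sum _ (finSG n (r-1) s),
    finsum_mem_eq_finite_toFinset_sum _ (finSG n (r-1) s), Finset.mul_sum]

lemma sF_rec (n : ℕ) (r : ℤ) (s : ℕ) (hr : 0 ≤ r) :
    sF α (n+1) r s = sG α n (r+1) s + wh α r * sG α n r s := by
  unfold sG sF
  rw [D2 hr]
  rw [finsum_mem_union ?disj ((finSG n (r+1) s).image _) ((finSG n r s).image _)]
  case disj =>
    rw [Set.disjoint_left]
    rintro l ⟨t, -, rfl⟩ ⟨u, -, hu⟩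
    have := (List.cons_eq_cons.mp hu).1
    simp [Prod.ext_iff] at this
  congr 1
  · rw [finsum_mem_image (fun x _ y _ h => List.cons_injective h)]
    apply finsum_mem_congr rfl
    intro t _
    show wtSstep α ((0:ℤ), r) ((1:ℤ),(1:ℤ)) * pathWeight (wtSstep α) (((0:ℤ),r) + ((1:ℤ),(1:ℤ))) t = _
    rw [wt_up, one_mul, show ((0:ℤ),r) + ((1:ℤ),(1:ℤ)) = ((1:ℤ), r+1) by simp [Prod.ext_iff]]
    have := pathWeight_shift α 1 t ((0:ℤ), r+1)
    simpa using this
  · rw [finsum_mem_image (fun x _ y _ h => List.cons_injective h)]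
    have hcong : ∀ t ∈ SG n r s, pathWeight (wtSstep α) ((0:ℤ), r) (((1:ℤ),(0:ℤ)) :: t) =
        wh α r * pathWeight (wtSstep α) ((0:ℤ), r) t := by
      intro t _
      show wtSstep α ((0:ℤ), r) ((1:ℤ),(0:ℤ)) * pathWeight (wtSstep α) (((0:ℤ),r) + ((1:ℤ),(0:ℤ))) t = _
      rw [wt_h, show ((0:ℤ),r) + ((1:ℤ),(0:ℤ)) = ((1:ℤ), r) by simp [Prod.ext_iff]]
      congr 1
      have := pathWeight_shift α 1 t ((0:ℤ), r)
      simpa using this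
    rw [finsum_mem_congr rfl hcong]
    rw [finsum_mem_eq_finite_toFinset_sum _ (finSG n r s),
      finsum_mem_eq_finite_toFinset_sum _ (finSG n r s), Finset.mul_sum]

lemma sFG : ∀ (n : ℕ) (r s : ℕ), sF α n (r:ℤ) s = FF α n r s := by
  intro n
  induction n with
  | zero =>
      intro r s
      rw [sF0]
      show _ = if r = s then 1 else 0
      by_cases h : r = s
      · rw [if_pos h, if_pos (by exact_mod_cast h)]
      · rw [if_neg h, if_neg (by exact_mod_cast h)]
  | succ n ih =>
      have hG : ∀ (r s : ℕ), sG α n (r:ℤ) s = GGof α (FF α n) r s := by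
        intro r
        induction r with
        | zero =>
            intro s
            rw [show ((0:ℕ):ℤ) = 0 by norm_num, sG_rec α n 0 s (le_refl 0),
              sG_neg α (by omega)]
            have h0 := ih 0 s
            rw [show ((0:ℕ):ℤ) = 0 by norm_num] at h0
            rw [h0]
            show _ = FF α n 0 s
            ring
        | succ r ihr =>
            intro s
            rw [show ((r+1:ℕ):ℤ) = (r:ℤ)+1 by push_cast; ring, sG_rec α n ((r:ℤ)+1) s (by omega)]
            rw [show ((r:ℤ)+1-1) = (r:ℤ) by ring, ihr]
            rw [show ((r:ℤ)+1) = ((r+1:ℕ):ℤ) by push_cast; ring, ih]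
            rw [show ((r+1:ℕ):ℤ) = ((r:ℤ)+1) by push_cast; ring]
            rfl
      intro r s
      rw [sF_rec α n (r:ℤ) s (by positivity)]
      rw [show ((r:ℤ)+1) = ((r+1:ℕ):ℤ) by push_cast; ring, hG, hG]
      show _ = GGof α (FF α n) (r+1) s + wh α (r:ℤ) * GGof α (FF α n) r s
      rfl

end PathSums



/-- assuming `α_n ≠ 0` for all `n`, the generalized moment `μ_{n,r,s}`
equals the weight sum over Schröder paths from `(0,r)` to `(n,s)` that do not start
with a vertical down-step. -/
theorem genMom_eq_schroeder (α : ℕ → ℂ) (hα : ∀ k, ‖α k‖ < 1)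
    (hα0 : ∀ k, α k ≠ 0)
    (L : LaurentPolynomial ℂ →ₗ[ℂ] ℂ) (hL1 : L 1 = 1)
    (hLphi : ∀ k : ℕ, 1 ≤ k → L (Polynomial.toLaurent (szego α k)) = 0)
    (hLbar : ∀ k : ℕ, 1 ≤ k → L (polyBarInv (szego α k)) = 0)
    (n r s : ℕ) :
    genMom L α n r s =
      ∑ᶠ p ∈ {l : List (ℤ × ℤ) |
          IsLatticePath schStep (0, (r : ℤ)) l ((n : ℤ), (s : ℤ)) ∧
            l.head? ≠ some (0, -1)},
        pathWeight (wtSstep α) (0, (r : ℤ)) p := by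
  have h1 : genMom L α (n:ℤ) r s = Mm α L n r s := by
    unfold genMom Mm pp qq Kp
    rw [laurentBarInv_T_mul, laurentBarInv_toLaurent]
  rw [h1, momFF α L hα hα0 hL1 hLphi hLbar, ← sFG α n r s]
  unfold sF SF
  rfl

end
end

section
/- (Single inserted mass point.) Let γ ∈ (0,1) and set α_n = γ/(1+nγ) for all n ≥ 0 (so 0 < α_n < 1). Then for all nonnegative integers n and m: μ_{n,m} = δ_{n,m} if n ≤ m, and μ_{n,m} = γ/(1+mγ) if n > m. -/
open Polynomial LaurentPolynomial Finset

noncomputable section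

lemma reflect_finset_sum {ι : Type*} (N : ℕ) (s : Finset ι) (f : ι → ℂ[X]) :
    reflect N (∑ i ∈ s, f i) = ∑ i ∈ s, reflect N (f i) := by
  classical
  induction s using Finset.cons_induction with
  | empty => simp
  | cons a s ha ih => rw [Finset.sum_cons, Finset.sum_cons, reflect_add, ih]

def pbiHom : ℂ[X] →+ LaurentPolynomial ℂ where
  toFun := polyBarInv
  map_zero' := Polynomial.sum_zero_index _
  map_add' f g :=
    Polynomial.sum_add_index f g
      (fun k c => LaurentPolynomial.C ((starRingEnd ℂ) c) * LaurentPolynomial.T (-(k:ℤ)))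
      (fun k => by simp) (fun k b c => by rw [map_add, map_add, add_mul])

lemma pbi_monomial (a : ℂ) (k : ℕ) :
    polyBarInv (Polynomial.C a * X ^ k)
      = LaurentPolynomial.C ((starRingEnd ℂ) a) * LaurentPolynomial.T (-(k:ℤ)) := by
  rw [C_mul_X_pow_eq_monomial]
  unfold polyBarInv
  rw [Polynomial.sum_monomial_index]
  simp

lemma pbi_X_pow (k : ℕ) :
    polyBarInv ((X:ℂ[X]) ^ k) = LaurentPolynomial.T (-(k:ℤ)) := by
  have := pbi_monomial 1 k
  simpa using this

lemma lbi_T (n : ℤ) : laurentBarInv (LaurentPolynomial.T n) = LaurentPolynomial.T (-n) := by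
  unfold laurentBarInv
  rw [LaurentPolynomial.T, AddMonoidAlgebra.coeff_single, Finsupp.sum_single_index] <;> simp

lemma hLC (L : LaurentPolynomial ℂ →ₗ[ℂ] ℂ) (a : ℂ) (f : LaurentPolynomial ℂ) :
    L (LaurentPolynomial.C a * f) = a * L f := by
  rw [show (LaurentPolynomial.C a * f) = a • f from by rw [Algebra.smul_def]; rfl, map_smul]
  rfl

section withγ
variable (γ : ℝ) (hγ0 : 0 < γ) (hγ1 : γ < 1) (α : ℕ → ℂ)
  (hα : α = fun n : ℕ => ((γ / (1 + n * γ) : ℝ) : ℂ))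

include hγ0 hα

omit hγ0 in
lemma hconj : ∀ n, (starRingEnd ℂ) (α n) = α n := by
  intro n; rw [hα]; exact Complex.conj_ofReal _

omit hα in
lemma cast_ne (x : ℝ) (hx : 0 ≤ x) : (1 + (x:ℂ) * (γ:ℝ)) ≠ 0 := by
  have h1 : (0:ℝ) < 1 + x * γ := by positivity
  have := Complex.ofReal_ne_zero.mpr h1.ne'
  push_cast at this
  exact this

lemma key_sum : ∀ j : ℕ, α j * (1 + (j:ℂ) * (γ:ℝ)) = (γ:ℂ) := by
  intro j
  have d1 : (1 + ((j:ℕ):ℂ) * (γ:ℝ)) ≠ 0 := by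
    have := cast_ne γ hγ0 (j:ℝ) (by positivity)
    push_cast at this ⊢; exact this
  rw [hα]
  simp only
  push_cast [Complex.ofReal_div]
  have e1 : (1:ℂ) + ((γ:ℝ):ℂ) * (j:ℂ) ≠ 0 := by contrapose! d1; linear_combination d1
  field_simp

lemma szego_closed :
    ∀ m : ℕ, 1 ≤ m →
      szego α m = X ^ m - Polynomial.C (α (m - 1)) * ∑ k ∈ range m, X ^ k := by
  have hc := hconj γ α hα
  intro m hm
  induction m, hm using Nat.le_induction with
  | base =>
      show X * szego α 0 - _ = _
      simp [szego, hc]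
  | succ m hm IH =>
      have hkey : α (m - 1) * (1 - α m) = α m := by
        obtain ⟨k, rfl⟩ := Nat.exists_eq_add_of_le hm
        have d1 : (1 + (k:ℂ) * (γ:ℝ)) ≠ 0 := by
          have := cast_ne γ hγ0 (k:ℝ) (by positivity)
          push_cast at this ⊢; exact this
        have d2 : (1 + (1 + (k:ℂ)) * (γ:ℝ)) ≠ 0 := by
          have := cast_ne γ hγ0 (1 + (k:ℝ)) (by positivity)
          push_cast at this ⊢; exact this
        rw [hα]
        simp only [show 1 + k - 1 = k from by omega]
        push_cast [Complex.ofReal_div]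
        generalize hD1 : (1 + (k:ℂ) * (γ:ℝ)) = D1 at d1 ⊢
        generalize hD2 : (1 + (1 + (k:ℂ)) * (γ:ℝ)) = D2 at d2 ⊢
        field_simp
        subst hD1 hD2
        ring
      have hC : Polynomial.C (α (m - 1)) - Polynomial.C (α (m - 1)) * Polynomial.C (α m)
          = Polynomial.C (α m) := by
        rw [← Polynomial.C_mul, ← Polynomial.C_sub]
        congr 1
        linear_combination hkey
      show X * szego α m - _ = _
      rw [IH]
      have hmap : ((X:ℂ[X]) ^ m - Polynomial.C (α (m-1)) * ∑ k ∈ range m, X ^ k).map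
          (starRingEnd ℂ) = X ^ m - Polynomial.C (α (m-1)) * ∑ k ∈ range m, X ^ k := by
        rw [Polynomial.map_sub, Polynomial.map_mul, Polynomial.map_pow, Polynomial.map_X,
          map_C, hc, Polynomial.map_sum]
        simp
      rw [hmap, hc]
      have hrefl : reflect m ((X:ℂ[X]) ^ m - Polynomial.C (α (m-1)) * ∑ k ∈ range m, X ^ k)
          = 1 - Polynomial.C (α (m-1)) * ∑ k ∈ range m, X ^ (k+1) := by
        rw [reflect_sub, reflect_C_mul, reflect_monomial, revAt_le (le_refl m),
          Nat.sub_self, pow_zero, reflect_finset_sum]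
        congr 1
        congr 1
        rw [← Finset.sum_range_reflect (fun k => (X:ℂ[X]) ^ (k+1)) m]
        apply Finset.sum_congr rfl
        intro j hj
        rw [Finset.mem_range] at hj
        rw [reflect_monomial, revAt_le (by omega : j ≤ m)]
        congr 1
        omega
      rw [hrefl]
      have hXS : X * ∑ k ∈ range m, (X:ℂ[X]) ^ k = ∑ k ∈ range m, X ^ (k+1) := by
        rw [Finset.mul_sum]
        exact Finset.sum_congr rfl fun k _ => by ring
      rw [show m + 1 - 1 = m from rfl,
        Finset.sum_range_succ' (fun k => (X:ℂ[X]) ^ k) m, pow_zero]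
      linear_combination (-(Polynomial.C (α (m-1)))) * hXS +
        (-(∑ k ∈ range m, (X:ℂ[X]) ^ (k+1))) * hC

lemma tl_closed (m : ℕ) (hm : 1 ≤ m) :
    Polynomial.toLaurent (szego α m)
      = LaurentPolynomial.T (m:ℤ) -
        LaurentPolynomial.C (α (m-1)) * ∑ j ∈ range m, LaurentPolynomial.T (j:ℤ) := by
  rw [szego_closed γ hγ0 α hα m hm, map_sub, map_mul, Polynomial.toLaurent_C, map_sum,
    Polynomial.toLaurent_X_pow]
  congr 1
  congr 1
  exact Finset.sum_congr rfl fun j _ => Polynomial.toLaurent_X_pow j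

lemma pbi_closed (m : ℕ) (hm : 1 ≤ m) :
    polyBarInv (szego α m)
      = LaurentPolynomial.T (-(m:ℤ)) -
        LaurentPolynomial.C (α (m-1)) * ∑ j ∈ range m, LaurentPolynomial.T (-(j:ℤ)) := by
  have hc := hconj γ α hα
  rw [szego_closed γ hγ0 α hα m hm]
  have h1 : polyBarInv ((X:ℂ[X]) ^ m - Polynomial.C (α (m-1)) * ∑ k ∈ range m, X ^ k)
      = pbiHom ((X:ℂ[X]) ^ m) - pbiHom (Polynomial.C (α (m-1)) * ∑ k ∈ range m, X ^ k) :=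
    map_sub pbiHom _ _
  rw [h1]
  have h2 : pbiHom ((X:ℂ[X]) ^ m) = LaurentPolynomial.T (-(m:ℤ)) := pbi_X_pow m
  have h3 : pbiHom (Polynomial.C (α (m-1)) * ∑ k ∈ range m, X ^ k)
      = LaurentPolynomial.C (α (m-1)) * ∑ j ∈ range m, LaurentPolynomial.T (-(j:ℤ)) := by
    rw [Finset.mul_sum, map_sum, Finset.mul_sum]
    apply Finset.sum_congr rfl
    intro j _
    have := pbi_monomial (α (m-1)) j
    rw [hc] at this
    exact this
  rw [h2, h3]

lemma momT (L : LaurentPolynomial ℂ →ₗ[ℂ] ℂ) (hL1 : L 1 = 1)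
    (hLphi : ∀ k : ℕ, 1 ≤ k → L (Polynomial.toLaurent (szego α k)) = 0)
    (hLbar : ∀ k : ℕ, 1 ≤ k → L (polyBarInv (szego α k)) = 0) :
    ∀ k : ℤ, L (LaurentPolynomial.T k) = if k = 0 then 1 else ((γ:ℝ):ℂ) := by
  have hks := key_sum γ hγ0 α hα
  have pos : ∀ j : ℕ, L (LaurentPolynomial.T (j:ℤ)) = if j = 0 then 1 else ((γ:ℝ):ℂ) := by
    intro j
    induction j using Nat.strong_induction_on with
    | _ j IH =>
      match j with
      | 0 => simp [hL1]
      | k+1 =>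
        have h0 := hLphi (k+1) (by omega)
        rw [tl_closed γ hγ0 α hα (k+1) (by omega), map_sub, hLC, map_sum] at h0
        simp only [Nat.add_sub_cancel] at h0
        have hsum : ∑ j ∈ range (k+1), L (LaurentPolynomial.T (j:ℤ)) = 1 + (k:ℂ) * (γ:ℝ) := by
          rw [Finset.sum_range_succ' (fun j => L (LaurentPolynomial.T (j:ℤ))) k]
          have h1 : ∀ j ∈ range k, L (LaurentPolynomial.T ((j+1:ℕ):ℤ)) = ((γ:ℝ):ℂ) := by
            intro j hj
            rw [Finset.mem_range] at hj
            rw [IH (j+1) (by omega)]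
            simp
          rw [Finset.sum_congr rfl h1, Finset.sum_const, card_range, IH 0 (by omega)]
          rw [if_pos rfl, nsmul_eq_mul]
          ring
        rw [hsum] at h0
        rw [if_neg (by omega), ← hks k]
        linear_combination h0
  have neg : ∀ j : ℕ, L (LaurentPolynomial.T (-(j:ℤ))) = if j = 0 then 1 else ((γ:ℝ):ℂ) := by
    intro j
    induction j using Nat.strong_induction_on with
    | _ j IH =>
      match j with
      | 0 => simp [hL1]
      | k+1 =>
        have h0 := hLbar (k+1) (by omega)
        rw [pbi_closed γ hγ0 α hα (k+1) (by omega), map_sub, hLC, map_sum] at h0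
        simp only [Nat.add_sub_cancel] at h0
        have hsum : ∑ j ∈ range (k+1), L (LaurentPolynomial.T (-(j:ℤ)))
            = 1 + (k:ℂ) * (γ:ℝ) := by
          rw [Finset.sum_range_succ' (fun j => L (LaurentPolynomial.T (-(j:ℤ)))) k]
          have h1 : ∀ j ∈ range k, L (LaurentPolynomial.T (-((j+1:ℕ):ℤ))) = ((γ:ℝ):ℂ) := by
            intro j hj
            rw [Finset.mem_range] at hj
            rw [IH (j+1) (by omega)]
            simp
          rw [Finset.sum_congr rfl h1, Finset.sum_const, card_range, IH 0 (by omega)]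
          rw [if_pos rfl, nsmul_eq_mul]
          ring
        rw [hsum] at h0
        rw [if_neg (by omega), ← hks k]
        linear_combination h0
  intro k
  obtain ⟨j, rfl | rfl⟩ := Int.eq_nat_or_neg k
  · rw [pos j]
    by_cases h : j = 0 <;> simp [h]
  · rw [neg j]
    by_cases h : j = 0 <;> simp [h]

omit hα in
lemma Bpos (m : ℕ) (hγ1 : γ < 1) : (0:ℝ) < 1 + ((m:ℝ) - 1) * γ := by
  have : (0:ℝ) ≤ (m:ℝ) := Nat.cast_nonneg m
  nlinarith

omit hα in
lemma prodR (hγ1 : γ < 1) : ∀ m : ℕ,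
    ∏ j ∈ range m, (1 - (γ/(1+(j:ℝ)*γ)) * (γ/(1+(j:ℝ)*γ)))
      = (1-γ)*(1+(m:ℝ)*γ)/(1+((m:ℝ)-1)*γ) := by
  intro m
  induction m with
  | zero =>
      have h : (1:ℝ) + ((0:ℝ) - 1) * γ ≠ 0 := by nlinarith
      simp only [range_zero, prod_empty, Nat.cast_zero]
      rw [eq_comm, div_eq_one_iff_eq ((by nlinarith : (0:ℝ) < 1 + ((0:ℝ)-1)*γ).ne')]
      ring
  | succ m ih =>
      have hA : (1:ℝ) + (m:ℝ) * γ ≠ 0 := by positivity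
      have hB : (1:ℝ) + ((m:ℝ) - 1) * γ ≠ 0 := (Bpos γ hγ0 m hγ1).ne'
      have hC' : (1:ℝ) + (((m:ℝ)+1) - 1) * γ ≠ 0 := by
        have := Bpos γ hγ0 (m+1) hγ1
        push_cast at this
        exact this.ne'
      rw [prod_range_succ, ih]
      push_cast
      rw [add_sub_cancel_right]
      generalize hD1 : (1:ℝ) + (m:ℝ) * γ = D1 at hA ⊢
      generalize hD2 : (1:ℝ) + ((m:ℝ) - 1) * γ = D2 at hB ⊢
      field_simp
      subst hD1 hD2
      ring

lemma prodC (hγ1 : γ < 1) (m : ℕ) :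
    ∏ j ∈ range m, ((1 - Complex.normSq (α j) : ℝ) : ℂ)
      = (((1-γ)*(1+(m:ℝ)*γ)/(1+((m:ℝ)-1)*γ) : ℝ) : ℂ) := by
  have h1 : ∀ j ∈ range m, ((1 - Complex.normSq (α j) : ℝ) : ℂ)
      = (((1 - (γ/(1+(j:ℝ)*γ)) * (γ/(1+(j:ℝ)*γ)) : ℝ)) : ℂ) := by
    intro j _
    rw [hα]
    simp only []
    rw [Complex.normSq_ofReal]
  rw [Finset.prod_congr rfl h1, ← Complex.ofReal_prod, prodR γ hγ0 hγ1 m]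

end withγ


/-- single inserted mass point: with `α_n = γ/(1+nγ)`, `γ ∈ (0,1)`,
the moments are `μ_{n,m} = δ_{n,m}` for `n ≤ m` and `μ_{n,m} = γ/(1+mγ)` for `n > m`. -/
theorem single_mass_point (γ : ℝ) (hγ0 : 0 < γ) (hγ1 : γ < 1) (α : ℕ → ℂ)
    (hαdef : α = fun n : ℕ => ((γ / (1 + n * γ) : ℝ) : ℂ))
    (L : LaurentPolynomial ℂ →ₗ[ℂ] ℂ) (hL1 : L 1 = 1)
    (hLphi : ∀ k : ℕ, 1 ≤ k → L (Polynomial.toLaurent (szego α k)) = 0)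
    (hLbar : ∀ k : ℕ, 1 ≤ k → L (polyBarInv (szego α k)) = 0) :
    ∀ n m : ℕ,
      (n ≤ m → genMom L α n 0 m = if n = m then 1 else 0) ∧
      (m < n → genMom L α n 0 m = ((γ / (1 + m * γ) : ℝ) : ℂ)) := by
  have hmom := momT γ hγ0 α hαdef L hL1 hLphi hLbar
  have hks := key_sum γ hγ0 α hαdef
  intro n m
  have hg : genMom L α n 0 m
      = L (Polynomial.toLaurent (szego α m) * LaurentPolynomial.T (-(n:ℤ))) /
        ∏ j ∈ range m, ((1 - Complex.normSq (α j) : ℝ) : ℂ) := by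
    unfold genMom
    rw [show szego α 0 = 1 from rfl, map_one, mul_one, lbi_T]
  match m with
  | 0 =>
      rw [prod_range_zero, div_one] at hg
      rw [show Polynomial.toLaurent (szego α 0) = 1 from by rw [show szego α 0 = 1 from rfl, map_one],
        one_mul, hmom] at hg
      constructor
      · intro hn
        have : n = 0 := by omega
        subst this
        rw [hg]
        norm_num
      · intro hn
        rw [hg, if_neg (by omega)]
        norm_num
  | M + 1 =>
      set m := M + 1 with hmdef
      have hnum : L (Polynomial.toLaurent (szego α m) * LaurentPolynomial.T (-(n:ℤ)))
          = (if (m:ℤ) - n = 0 then 1 else ((γ:ℝ):ℂ))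
            - α M * ∑ j ∈ range m, (if (j:ℤ) - n = 0 then 1 else ((γ:ℝ):ℂ)) := by
        rw [tl_closed γ hγ0 α hαdef m (by omega)]
        rw [show m - 1 = M from by omega]
        rw [sub_mul, mul_assoc, Finset.sum_mul]
        have h2 : ∀ j ∈ range m,
            (LaurentPolynomial.T (j:ℤ) * LaurentPolynomial.T (-(n:ℤ)) : LaurentPolynomial ℂ)
              = LaurentPolynomial.T ((j:ℤ) - n) := fun j _ => (T_sub _ _).symm
        rw [Finset.sum_congr rfl h2, ← T_sub, map_sub, hLC, map_sum, hmom]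
        congr 1
        congr 1
        exact Finset.sum_congr rfl fun j _ => hmom _
      have hprod := prodC γ hγ0 α hαdef hγ1 m
      have hBpos := Bpos γ hγ0 m hγ1
      have hApos : (0:ℝ) < 1 + (m:ℝ) * γ := by positivity
      have hMpos : (0:ℝ) < 1 + (M:ℝ) * γ := by positivity
      have hMeq : (1:ℝ) + ((m:ℝ) - 1) * γ = 1 + (M:ℝ) * γ := by
        rw [hmdef]; push_cast; ring
      have hPne : (∏ j ∈ range m, ((1 - Complex.normSq (α j) : ℝ) : ℂ)) ≠ 0 := by
        rw [hprod]
        rw [Complex.ofReal_ne_zero]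
        have : (0:ℝ) < (1-γ)*(1+(m:ℝ)*γ)/(1+((m:ℝ)-1)*γ) :=
          div_pos (mul_pos (by linarith) hApos) hBpos
        exact this.ne'
      have hαM : α M = ((γ / (1 + (M:ℝ) * γ) : ℝ) : ℂ) := by rw [hαdef]
      constructor
      · intro hn
        rcases lt_or_eq_of_le hn with hlt | heq
        · -- n < m : numerator is zero
          rw [if_neg (by omega : ¬ n = m), hg, hnum]
          have hsum : ∑ j ∈ range m, (if (j:ℤ) - n = 0 then 1 else ((γ:ℝ):ℂ))
              = 1 + (M:ℂ) * ((γ:ℝ):ℂ) := by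
            have h3 : ∀ j ∈ range m, (if (j:ℤ) - (n:ℤ) = 0 then (1:ℂ) else ((γ:ℝ):ℂ))
                = ((γ:ℝ):ℂ) + (if j = n then 1 - ((γ:ℝ):ℂ) else 0) := by
              intro j _
              by_cases h : j = n
              · rw [if_pos (by omega), if_pos h]; ring
              · rw [if_neg (by omega), if_neg h]; ring
            rw [Finset.sum_congr rfl h3, Finset.sum_add_distrib, Finset.sum_const, card_range,
              Finset.sum_ite_eq' (range m) n (fun _ => 1 - ((γ:ℝ):ℂ)),
              if_pos (Finset.mem_range.2 hlt), nsmul_eq_mul]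
            rw [hmdef]
            push_cast
            ring
          rw [hsum, if_neg (by omega)]
          have : α M * (1 + (M:ℂ) * ((γ:ℝ):ℂ)) = ((γ:ℝ):ℂ) := hks M
          rw [show ((γ:ℝ):ℂ) - α M * (1 + (M:ℂ) * ((γ:ℝ):ℂ)) = 0 from by
            rw [this]; ring, zero_div]
        · -- n = m
          rw [if_pos heq, hg, hnum, hprod]
          have hsum : ∑ j ∈ range m, (if (j:ℤ) - (n:ℤ) = 0 then (1:ℂ) else ((γ:ℝ):ℂ))
              = (m:ℂ) * ((γ:ℝ):ℂ) := by
            have h3 : ∀ j ∈ range m, (if (j:ℤ) - (n:ℤ) = 0 then (1:ℂ) else ((γ:ℝ):ℂ))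
                = ((γ:ℝ):ℂ) := by
              intro j hj
              rw [Finset.mem_range] at hj
              rw [if_neg (by omega)]
            rw [Finset.sum_congr rfl h3, Finset.sum_const, card_range, nsmul_eq_mul]
          rw [hsum, if_pos (by omega), hαM]
          rw [div_eq_one_iff_eq (by rw [← hprod]; exact hPne)]
          have hMne : ((1 + (M:ℝ) * γ : ℝ) : ℂ) ≠ 0 := Complex.ofReal_ne_zero.2 hMpos.ne'
          have hBne : ((1 + ((m:ℝ) - 1) * γ : ℝ) : ℂ) ≠ 0 := Complex.ofReal_ne_zero.2 hBpos.ne'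
          rw [hmdef]
          push_cast
          rw [hmdef] at hBne
          push_cast at hBne hMne
          rw [add_sub_cancel_right]
          generalize hD1 : 1 + (M:ℂ) * ((γ:ℝ):ℂ) = D1 at hMne ⊢
          field_simp
          subst hD1
          ring
      · -- m < n
        intro hn
        rw [hg, hnum, hprod]
        have hsum : ∑ j ∈ range m, (if (j:ℤ) - (n:ℤ) = 0 then (1:ℂ) else ((γ:ℝ):ℂ))
            = (m:ℂ) * ((γ:ℝ):ℂ) := by
          have h3 : ∀ j ∈ range m, (if (j:ℤ) - (n:ℤ) = 0 then (1:ℂ) else ((γ:ℝ):ℂ))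
              = ((γ:ℝ):ℂ) := by
            intro j hj
            rw [Finset.mem_range] at hj
            rw [if_neg (by omega)]
          rw [Finset.sum_congr rfl h3, Finset.sum_const, card_range, nsmul_eq_mul]
        rw [hsum, if_neg (by omega), hαM]
        rw [div_eq_iff (by rw [← hprod]; exact hPne)]
        have hMne : ((1 + (M:ℝ) * γ : ℝ) : ℂ) ≠ 0 := Complex.ofReal_ne_zero.2 hMpos.ne'
        have hBne : ((1 + ((m:ℝ) - 1) * γ : ℝ) : ℂ) ≠ 0 := Complex.ofReal_ne_zero.2 hBpos.ne'
        have hmne : ((1 + (m:ℝ) * γ : ℝ) : ℂ) ≠ 0 := Complex.ofReal_ne_zero.2 hApos.ne'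
        rw [hmdef]
        push_cast
        rw [hmdef] at hBne hmne
        push_cast at hBne hMne hmne
        rw [add_sub_cancel_right]
        generalize hD1 : 1 + (M:ℂ) * ((γ:ℝ):ℂ) = D1 at hMne ⊢
        generalize hD2 : 1 + ((M:ℂ) + 1) * ((γ:ℝ):ℂ) = D2 at hmne ⊢
        field_simp
        subst hD1 hD2
        ring


end
end
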